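/- For F(X) ∈ O_K[[X]] and γ acting by γ(π_n) = (1+π_n)^{χ(γ)} − 1 with χ(γ) ∈ 1 + p^n ℤ_p, one has γ(F(π_n)) ≡ F(π_n) mod π·O_K[[π_n]], where π = (1+π_n)^{p^n} − 1. More precisely γ(F(π_n)) − F(π_n) ≡ ((χ(γ)−1)/p^n)·D F(π_n)·π mod π²·O_K[[π_n]] ⊗ ℚ_p, where D = (1+X)d/dX. -/

import Mathlib

open PowerSeries

/-- The binomial series `(1+X)^χ := Σ_k C(χ,k) X^k` for `χ ∈ ℤ_p`. -/
noncomputable def binomialSeriesQp (p : ℕ) [Fact p.Prime] (χ : ℤ_[p]) : PowerSeries ℚ_[p] :=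
  PowerSeries.mk fun k =>
    (∏ i ∈ Finset.range k, ((χ : ℚ_[p]) - i)) / (Nat.factorial k)

/-- The action of `γ` on `F(π_n)`: substitution of `γ(π_n) = (1+π_n)^χ - 1` into `F`, given
coefficientwise by the (finite) composition formula. -/
noncomputable def gammaSubst (p : ℕ) [Fact p.Prime] (χ : ℤ_[p]) (F : PowerSeries ℚ_[p]) :
    PowerSeries ℚ_[p] :=
  PowerSeries.mk fun j => ∑ m ∈ Finset.range (j + 1),
    coeff m F * coeff j ((binomialSeriesQp p χ - 1) ^ m)

namespace BenoisAux

variable {p : ℕ} [Fact p.Prime]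

/-- Coefficientwise sum of a family of power series whose orders grow. -/
noncomputable def ser (f : ℕ → PowerSeries ℚ_[p]) : PowerSeries ℚ_[p] :=
  PowerSeries.mk fun j => ∑ m ∈ Finset.range (j + 1), coeff j (f m)

def adm (f : ℕ → PowerSeries ℚ_[p]) : Prop := ∀ m, (X : PowerSeries ℚ_[p]) ^ m ∣ f m

def Intl (f : PowerSeries ℚ_[p]) : Prop := ∀ j, ‖coeff j f‖ ≤ 1

lemma coeff_ser (f : ℕ → PowerSeries ℚ_[p]) (j : ℕ) :
    coeff j (ser f) = ∑ m ∈ Finset.range (j + 1), coeff j (f m) :=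
  coeff_mk _ _

lemma coeff_of_dvd_pow {f : PowerSeries ℚ_[p]} {m j : ℕ} (h : (X : PowerSeries ℚ_[p]) ^ m ∣ f)
    (hj : j < m) : coeff j f = 0 :=
  (PowerSeries.X_pow_dvd_iff.mp h) j hj

lemma ser_eq_partial {f : ℕ → PowerSeries ℚ_[p]} (hf : adm f) {j M : ℕ} (hM : j < M) :
    coeff j (ser f) = coeff j (∑ m ∈ Finset.range M, f m) := by
  rw [coeff_ser, map_sum]
  apply Finset.sum_subset
  · exact Finset.range_subset_range.mpr hM
  · intro m _ hm
    simp only [Finset.mem_range, not_lt] at hm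
    exact coeff_of_dvd_pow (hf m) hm

lemma X_pow_dvd_ser_sub {f : ℕ → PowerSeries ℚ_[p]} (hf : adm f) (M : ℕ) :
    (X : PowerSeries ℚ_[p]) ^ M ∣ (ser f - ∑ m ∈ Finset.range M, f m) := by
  rw [PowerSeries.X_pow_dvd_iff]
  intro j hj
  rw [map_sub, ser_eq_partial hf hj, sub_self]

lemma coeff_eq_zero_of_X_pow_dvd {f : PowerSeries ℚ_[p]} {j M : ℕ}
    (h : (X : PowerSeries ℚ_[p]) ^ M ∣ f) (hj : j < M) : coeff j f = 0 :=
  coeff_of_dvd_pow h hj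

lemma ser_mul {f : ℕ → PowerSeries ℚ_[p]} (hf : adm f) (P : PowerSeries ℚ_[p]) :
    ser (fun m => P * f m) = P * ser f := by
  ext j
  have hadm : adm (fun m => P * f m) := fun m => Dvd.dvd.mul_left (hf m) P
  rw [ser_eq_partial hadm (Nat.lt_succ_self j)]
  have h1 : P * ser f = P * (∑ m ∈ Finset.range (j+1), f m)
      + P * (ser f - ∑ m ∈ Finset.range (j+1), f m) := by ring
  rw [h1, map_add, ← Finset.mul_sum]
  have h2 : coeff j (P * (ser f - ∑ m ∈ Finset.range (j+1), f m)) = 0 :=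
    coeff_of_dvd_pow (Dvd.dvd.mul_left (X_pow_dvd_ser_sub hf (j+1)) P) (Nat.lt_succ_self j)
  rw [h2, add_zero]

lemma ser_split {f : ℕ → PowerSeries ℚ_[p]} (hf : adm f) :
    ser f = f 0 + ser (fun m => f (m + 1)) := by
  ext j
  rw [map_add, coeff_ser, coeff_ser, Finset.sum_range_succ']
  rw [Finset.sum_range_succ, coeff_of_dvd_pow (hf (j+1)) (Nat.lt_succ_self j), add_zero,
    add_comm]

lemma ser_shift {f : ℕ → PowerSeries ℚ_[p]} (hf : adm f) (h0 : f 0 = 0) :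
    ser f = ser (fun m => f (m + 1)) := by
  rw [ser_split hf, h0, zero_add]

lemma ser_add (f g : ℕ → PowerSeries ℚ_[p]) :
    ser (fun m => f m + g m) = ser f + ser g := by
  ext j
  simp [coeff_ser, Finset.sum_add_distrib]

lemma ser_sub (f g : ℕ → PowerSeries ℚ_[p]) :
    ser (fun m => f m - g m) = ser f - ser g := by
  ext j
  simp [coeff_ser, Finset.sum_sub_distrib]

lemma ser_congr {f g : ℕ → PowerSeries ℚ_[p]} (h : ∀ m, f m = g m) : ser f = ser g := by
  ext j; simp only [coeff_ser]; exact Finset.sum_congr rfl fun m _ => by rw [h m]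

/- Integrality -/

lemma Intl.one : Intl (1 : PowerSeries ℚ_[p]) := by
  intro j; rcases eq_or_ne j 0 with h | h <;> simp [coeff_one, h]

lemma Intl.X : Intl (X : PowerSeries ℚ_[p]) := by
  intro j; rcases eq_or_ne j 1 with h | h <;> simp [PowerSeries.coeff_X, h]

lemma Intl.C {c : ℚ_[p]} (h : ‖c‖ ≤ 1) : Intl (PowerSeries.C (R := ℚ_[p]) c) := by
  intro j; rcases eq_or_ne j 0 with h' | h' <;> simp [PowerSeries.coeff_C, h', h]

lemma Intl.add {f g : PowerSeries ℚ_[p]} (hf : Intl f) (hg : Intl g) : Intl (f + g) := by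
  intro j
  rw [map_add]
  exact (Padic.nonarchimedean _ _).trans (max_le (hf j) (hg j))

lemma Intl.neg {f : PowerSeries ℚ_[p]} (hf : Intl f) : Intl (-f) := by
  intro j; rw [map_neg, norm_neg]; exact hf j

lemma Intl.sub {f g : PowerSeries ℚ_[p]} (hf : Intl f) (hg : Intl g) : Intl (f - g) := by
  rw [sub_eq_add_neg]; exact hf.add hg.neg

lemma Intl.sum {s : Finset ℕ} {f : ℕ → PowerSeries ℚ_[p]} (hf : ∀ m ∈ s, Intl (f m)) :
    Intl (∑ m ∈ s, f m) := by
  intro j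
  rw [map_sum]
  exact IsUltrametricDist.norm_sum_le_of_forall_le_of_nonneg zero_le_one
    fun m hm => hf m hm j

lemma Intl.mul {f g : PowerSeries ℚ_[p]} (hf : Intl f) (hg : Intl g) : Intl (f * g) := by
  intro j
  rw [PowerSeries.coeff_mul]
  apply IsUltrametricDist.norm_sum_le_of_forall_le_of_nonneg zero_le_one
  intro m _
  rw [norm_mul]
  exact mul_le_one₀ (hf _) (norm_nonneg _) (hg _)

lemma Intl.pow {f : PowerSeries ℚ_[p]} (hf : Intl f) (k : ℕ) : Intl (f ^ k) := by
  induction k with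
  | zero => simpa using Intl.one
  | succ k ih => rw [pow_succ]; exact ih.mul hf

lemma Intl.ser {f : ℕ → PowerSeries ℚ_[p]} (hf : ∀ m, Intl (f m)) : Intl (ser f) := by
  intro j
  rw [coeff_ser]
  exact IsUltrametricDist.norm_sum_le_of_forall_le_of_nonneg zero_le_one fun m _ => hf m j

lemma norm_nat_le_one (m : ℕ) : ‖(m : ℚ_[p])‖ ≤ 1 := by
  simpa using Padic.norm_int_le_one (p := p) m

lemma Intl.natCast (m : ℕ) : Intl (m : PowerSeries ℚ_[p]) := by
  rw [← map_natCast (PowerSeries.C (R := ℚ_[p])) m]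
  exact Intl.C (norm_nat_le_one m)



/-- binomial coefficient function -/
noncomputable def bc (v : ℚ_[p]) (k : ℕ) : ℚ_[p] :=
  (∏ i ∈ Finset.range k, (v - i)) / (Nat.factorial k)

lemma prod_natCast (m k : ℕ) :
    (∏ i ∈ Finset.range k, ((m : ℚ_[p]) - i)) = (m.descFactorial k : ℚ_[p]) := by
  induction k with
  | zero => simp
  | succ k ih =>
      rw [Finset.prod_range_succ, ih, Nat.descFactorial_succ]
      rcases lt_trichotomy k m with h | h | h
      · push_cast [Nat.cast_sub h.le]
        ring
      · subst h
        simp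
      · have h2 : m.descFactorial k = 0 := Nat.descFactorial_eq_zero_iff_lt.mpr h
        have h3 : m.descFactorial (k+1) = 0 :=
          Nat.descFactorial_eq_zero_iff_lt.mpr (h.trans (Nat.lt_succ_self k))
        rw [h2]
        push_cast [h3]
        ring

lemma bc_natCast (m k : ℕ) : bc (m : ℚ_[p]) k = (m.choose k : ℚ_[p]) := by
  rw [bc, prod_natCast, Nat.descFactorial_eq_factorial_mul_choose]
  push_cast
  rw [mul_comm, mul_div_assoc,
    div_self (by exact_mod_cast Nat.cast_ne_zero.mpr (Nat.factorial_ne_zero k)), mul_one]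

lemma bc_zero (v : ℚ_[p]) : bc v 0 = 1 := by simp [bc]

lemma bc_one (v : ℚ_[p]) : bc v 1 = v := by simp [bc]

lemma continuous_coe : Continuous (fun z : ℤ_[p] => (z : ℚ_[p])) :=
  continuous_subtype_val

lemma bc_continuous (k : ℕ) : Continuous (fun z : ℤ_[p] => bc (z : ℚ_[p]) k) := by
  unfold bc
  apply Continuous.div_const
  apply continuous_finset_prod
  intro i _
  exact continuous_coe.sub continuous_const

/-- density of ℕ in ℤ_p, for closed conditions -/
lemma dense_nat {s : Set ℚ_[p]} (hs : IsClosed s) (f : ℤ_[p] → ℚ_[p]) (hf : Continuous f)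
    (h : ∀ m : ℕ, f (m : ℤ_[p]) ∈ s) : ∀ z, f z ∈ s := by
  intro z
  have h1 : Set.range (Nat.cast : ℕ → ℤ_[p]) ⊆ f ⁻¹' s := by
    rintro _ ⟨m, rfl⟩; exact h m
  have h2 : closure (Set.range (Nat.cast : ℕ → ℤ_[p])) ⊆ f ⁻¹' s :=
    closure_minimal h1 (hs.preimage hf)
  have h3 := PadicInt.denseRange_natCast (p := p)
  exact h2 (by rw [h3.closure_eq]; trivial)

lemma bc_norm_le (z : ℤ_[p]) (k : ℕ) : ‖bc (z : ℚ_[p]) k‖ ≤ 1 := by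
  have := dense_nat (s := {x : ℚ_[p] | ‖x‖ ≤ 1})
    (isClosed_le (by fun_prop) continuous_const)
    (fun z : ℤ_[p] => bc (z : ℚ_[p]) k) (bc_continuous k) ?_ z
  · exact this
  · intro m
    simp only [Set.mem_setOf_eq, PadicInt.coe_natCast, bc_natCast]
    exact norm_nat_le_one _



/- π and binomial series identities -/

noncomputable def pis (p n : ℕ) [Fact p.Prime] : PowerSeries ℚ_[p] :=
  (1 + X) ^ (p ^ n) - 1

lemma X_dvd_pis (n : ℕ) : (X : PowerSeries ℚ_[p]) ∣ pis p n := by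
  rw [PowerSeries.X_dvd_iff, pis, map_sub, map_pow, map_add, map_one, constantCoeff_X]
  simp

lemma X_pow_dvd_pis_pow (n k : ℕ) : (X : PowerSeries ℚ_[p]) ^ k ∣ (pis p n) ^ k :=
  pow_dvd_pow_of_dvd (X_dvd_pis n) k

lemma Intl.pis (n : ℕ) : Intl (pis p n) :=
  ((Intl.one.add Intl.X).pow _).sub Intl.one

lemma coeff_one_add_X_pow (m k : ℕ) :
    coeff k ((1 + X : PowerSeries ℚ_[p]) ^ m) = (m.choose k : ℚ_[p]) := by
  rw [add_comm, add_pow]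
  rw [map_sum]
  have h : ∀ i ∈ Finset.range (m + 1),
      coeff k ((X : PowerSeries ℚ_[p]) ^ i * 1 ^ (m - i) * (m.choose i : PowerSeries ℚ_[p]))
        = if k = i then (m.choose i : ℚ_[p]) else 0 := by
    intro i _
    rw [one_pow, mul_one, ← map_natCast (PowerSeries.C (R := ℚ_[p])) (m.choose i), mul_comm,
      PowerSeries.coeff_C_mul, PowerSeries.coeff_X_pow]
    by_cases h : k = i <;> simp [h]
  rw [Finset.sum_congr rfl h, Finset.sum_ite_eq]
  by_cases hk : k ∈ Finset.range (m + 1)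
  · simp [hk]
  · simp only [hk, if_false]
    rw [Finset.mem_range, not_lt] at hk
    rw [Nat.choose_eq_zero_of_lt (by omega)]
    simp

/-- `Σ_k choose(m,k) π^k = (1+X)^(p^n m)` -/
lemma natSer (n m : ℕ) :
    ser (fun k => PowerSeries.C (R := ℚ_[p]) (m.choose k : ℚ_[p]) * (pis p n) ^ k)
      = (1 + X : PowerSeries ℚ_[p]) ^ (p ^ n * m) := by
  have hadm : adm (fun k => PowerSeries.C (R := ℚ_[p]) (m.choose k : ℚ_[p]) * (pis p n) ^ k) :=
    fun k => Dvd.dvd.mul_left (X_pow_dvd_pis_pow n k) _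
  ext j
  rw [ser_eq_partial hadm (Nat.lt_succ_self j)]
  have hrhs : (1 + X : PowerSeries ℚ_[p]) ^ (p ^ n * m) = ((1 : PowerSeries ℚ_[p]) + pis p n) ^ m := by
    have h1 : (1 : PowerSeries ℚ_[p]) + pis p n = (1 + X) ^ (p ^ n) := by rw [pis]; ring
    rw [h1, ← pow_mul]
  rw [hrhs, add_comm, add_pow]
  have hterm : ∀ k, (pis p n) ^ k * (1:PowerSeries ℚ_[p]) ^ (m - k) * (m.choose k : PowerSeries ℚ_[p])
      = PowerSeries.C (R := ℚ_[p]) (m.choose k : ℚ_[p]) * (pis p n) ^ k := by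
    intro k
    rw [one_pow, mul_one, ← map_natCast (PowerSeries.C (R := ℚ_[p])) (m.choose k), mul_comm]
  rw [Finset.sum_congr rfl (fun k _ => hterm k)]
  rw [map_sum, map_sum]
  -- extend both sums to range (max j m + 1)
  have ext1 : ∀ M₁ : ℕ, j < M₁ → ∀ M₂ : ℕ, M₁ ≤ M₂ →
      (∑ k ∈ Finset.range M₁, coeff j (PowerSeries.C (R := ℚ_[p]) (m.choose k : ℚ_[p]) * (pis p n) ^ k))
      = ∑ k ∈ Finset.range M₂, coeff j (PowerSeries.C (R := ℚ_[p]) (m.choose k : ℚ_[p]) * (pis p n) ^ k) := by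
    intro M₁ h₁ M₂ h₂
    apply Finset.sum_subset (Finset.range_subset_range.mpr h₂)
    intro k _ hk
    rw [Finset.mem_range, not_lt] at hk
    by_cases hkm : m < k
    · rw [Nat.choose_eq_zero_of_lt hkm]; simp
    · exact coeff_of_dvd_pow (hadm k) (by omega)
  rw [ext1 (j+1) (Nat.lt_succ_self j) (max j m + 1) (by omega)]
  -- rhs: range (m+1), extend similarly but choose vanishes beyond m
  rw [show (∑ k ∈ Finset.range (m+1), coeff j (PowerSeries.C (R := ℚ_[p]) (m.choose k : ℚ_[p]) * (pis p n) ^ k))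
      = ∑ k ∈ Finset.range (max j m + 1), coeff j (PowerSeries.C (R := ℚ_[p]) (m.choose k : ℚ_[p]) * (pis p n) ^ k) from ?_]
  apply Finset.sum_subset (Finset.range_subset_range.mpr (by omega))
  intro k _ hk
  rw [Finset.mem_range, not_lt] at hk
  rw [Nat.choose_eq_zero_of_lt (by omega)]
  simp


lemma bc_continuous' (k : ℕ) : Continuous (fun v : ℚ_[p] => bc v k) := by
  unfold bc
  apply Continuous.div_const
  apply continuous_finset_prod
  intro i _
  exact continuous_id.sub continuous_const

lemma coeff_binomialSeries (χ : ℤ_[p]) (k : ℕ) :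
    coeff k (binomialSeriesQp p χ) = bc (χ : ℚ_[p]) k := by
  rw [binomialSeriesQp, coeff_mk]; rfl

lemma binomialSeries_natCast (M : ℕ) :
    binomialSeriesQp p (M : ℤ_[p]) = (1 + X : PowerSeries ℚ_[p]) ^ M := by
  ext k
  rw [coeff_binomialSeries, coeff_one_add_X_pow, PadicInt.coe_natCast, bc_natCast]

/-- Key identity: `(1+X)^(1+p^n u) = (1+X)·Σ_k C(u,k) π^k`. -/
lemma binomial_eq (n : ℕ) (u : ℤ_[p]) :
    binomialSeriesQp p ((1 : ℤ_[p]) + (p : ℤ_[p]) ^ n * u)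
      = (1 + X) * ser (fun k => PowerSeries.C (R := ℚ_[p]) (bc (u : ℚ_[p]) k) * (pis p n) ^ k) := by
  ext j
  have hadm : ∀ z : ℤ_[p], adm (fun k => PowerSeries.C (R := ℚ_[p]) (bc (z : ℚ_[p]) k) * (pis p n) ^ k) :=
    fun z k => Dvd.dvd.mul_left (X_pow_dvd_pis_pow n k) _
  -- the difference function
  set g : ℤ_[p] → ℚ_[p] := fun z =>
    coeff j (binomialSeriesQp p ((1 : ℤ_[p]) + (p : ℤ_[p]) ^ n * z)) -
      coeff j ((1 + X) * ser (fun k => PowerSeries.C (R := ℚ_[p]) (bc (z : ℚ_[p]) k) * (pis p n) ^ k))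
    with hg
  suffices h : ∀ z, g z ∈ ({0} : Set ℚ_[p]) by
    have := h u
    simp only [g, Set.mem_singleton_iff, sub_eq_zero] at this
    exact this
  apply dense_nat isClosed_singleton
  · -- continuity
    have hrw : ∀ z : ℤ_[p], g z = bc (1 + (p:ℚ_[p]) ^ n * (z : ℚ_[p])) j -
        ∑ ab ∈ Finset.HasAntidiagonal.antidiagonal j, coeff ab.1 (1 + X : PowerSeries ℚ_[p]) *
          ∑ k ∈ Finset.range (ab.2 + 1), bc (z : ℚ_[p]) k * coeff ab.2 ((pis p n) ^ k) := by
      intro z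
      rw [hg]
      dsimp only
      congr 1
      · rw [coeff_binomialSeries]
        norm_cast
      · rw [PowerSeries.coeff_mul]
        apply Finset.sum_congr rfl
        intro ab _
        congr 1
        rw [coeff_ser]
        apply Finset.sum_congr rfl
        intro k _
        rw [PowerSeries.coeff_C_mul]
    rw [funext hrw]
    apply Continuous.sub
    · exact (bc_continuous' j).comp
        (continuous_const.add (continuous_const.mul continuous_coe))
    · apply continuous_finset_sum
      intro ab _
      apply Continuous.mul continuous_const
      apply continuous_finset_sum
      intro k _
      exact ((bc_continuous' k).comp continuous_coe).mul continuous_const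
  · -- vanishing at naturals
    intro m
    simp only [g, Set.mem_singleton_iff, sub_eq_zero]
    have h1 : ((1 : ℤ_[p]) + (p : ℤ_[p]) ^ n * (m : ℤ_[p])) = ((1 + p ^ n * m : ℕ) : ℤ_[p]) := by
      push_cast; ring
    have h2 : ser (fun k => PowerSeries.C (R := ℚ_[p]) (bc ((m : ℤ_[p]) : ℚ_[p]) k) * (pis p n) ^ k)
        = (1 + X : PowerSeries ℚ_[p]) ^ (p ^ n * m) := by
      rw [← natSer n m]
      apply ser_congr
      intro k
      rw [PadicInt.coe_natCast, bc_natCast]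
    rw [h1, binomialSeries_natCast, h2, show 1 + p ^ n * m = p ^ n * m + 1 by omega, pow_succ']


section Main

variable (n : ℕ) (u : ℤ_[p]) (F : PowerSeries ℚ_[p])

set_option maxHeartbeats 2000000 in
theorem main_aux (hF : Intl F) :
    (∃ A : PowerSeries ℚ_[p], Intl A ∧
      gammaSubst p ((1 : ℤ_[p]) + (p : ℤ_[p]) ^ n * u) F - F = pis p n * A) ∧
    (∃ B : PowerSeries ℚ_[p], Intl B ∧
      gammaSubst p ((1 : ℤ_[p]) + (p : ℤ_[p]) ^ n * u) F - F -
          PowerSeries.C (R := ℚ_[p]) (u : ℚ_[p]) * ((1 + X) * PowerSeries.derivativeFun F) * pis p n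
        = (pis p n) ^ 2 * B) := by
  classical
  set χ : ℤ_[p] := (1 : ℤ_[p]) + (p : ℤ_[p]) ^ n * u with hχdef
  set π : PowerSeries ℚ_[p] := pis p n with hπdef
  set G : PowerSeries ℚ_[p] := binomialSeriesQp p χ - 1 with hGdef
  set a : ℕ → ℚ_[p] := fun m => coeff m F with hadef
  -- the three shifted binomial tails
  set Sb0 : PowerSeries ℚ_[p] := ser (fun k => PowerSeries.C (R := ℚ_[p]) (bc (u : ℚ_[p]) k) * π ^ k)
    with hSb0
  set Sb1 : PowerSeries ℚ_[p] :=
    ser (fun k => PowerSeries.C (R := ℚ_[p]) (bc (u : ℚ_[p]) (k + 1)) * π ^ k) with hSb1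
  set Sb2 : PowerSeries ℚ_[p] :=
    ser (fun k => PowerSeries.C (R := ℚ_[p]) (bc (u : ℚ_[p]) (k + 2)) * π ^ k) with hSb2
  have hadm0 : ∀ i : ℕ, adm (fun k => PowerSeries.C (R := ℚ_[p]) (bc (u : ℚ_[p]) (k + i)) * π ^ k) :=
    fun i k => Dvd.dvd.mul_left (X_pow_dvd_pis_pow n k) _
  have hIntlSb : ∀ i : ℕ, Intl (ser (fun k => PowerSeries.C (R := ℚ_[p]) (bc (u : ℚ_[p]) (k + i)) * π ^ k)) :=
    fun i => Intl.ser fun k => (Intl.C (bc_norm_le u (k + i))).mul ((Intl.pis n).pow k)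
  -- splitting the tails
  have hsplit : ∀ i : ℕ,
      ser (fun k => PowerSeries.C (R := ℚ_[p]) (bc (u : ℚ_[p]) (k + i)) * π ^ k)
        = PowerSeries.C (R := ℚ_[p]) (bc (u : ℚ_[p]) i)
          + π * ser (fun k => PowerSeries.C (R := ℚ_[p]) (bc (u : ℚ_[p]) (k + (i + 1))) * π ^ k) := by
    intro i
    rw [ser_split (hadm0 i)]
    congr 1
    · simp
    · rw [← ser_mul (hadm0 (i + 1)) π]
      apply ser_congr
      intro k
      have : k + 1 + i = k + (i + 1) := by omega
      rw [this]
      ring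
  have hS0 : Sb0 = 1 + π * Sb1 := by
    rw [hSb0]
    have := hsplit 0
    simp only [Nat.add_zero] at this
    rw [this, bc_zero, map_one]
  have hS1 : Sb1 = PowerSeries.C (R := ℚ_[p]) (u : ℚ_[p]) + π * Sb2 := by
    rw [hSb1]
    have := hsplit 1
    rw [this, bc_one]
  set H : PowerSeries ℚ_[p] := (1 + X) * Sb1 with hHdef
  set E : PowerSeries ℚ_[p] := (1 + X) * Sb2 with hEdef
  have hbin : binomialSeriesQp p χ = (1 + X) * Sb0 := binomial_eq n u
  have hG : G = X + π * H := by
    rw [hGdef, hbin, hS0, hHdef]; ring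
  have hGX : G - X = π * H := by rw [hG]; ring
  have hPiH : π * H = PowerSeries.C (R := ℚ_[p]) (u : ℚ_[p]) * (1 + X) * π + π ^ 2 * E := by
    rw [hHdef, hS1, hEdef]; ring
  have hXpi : (X : PowerSeries ℚ_[p]) ∣ π := X_dvd_pis n
  have hXG : (X : PowerSeries ℚ_[p]) ∣ G := by
    rw [hG]
    exact dvd_add (dvd_refl X) (Dvd.dvd.mul_right hXpi H)
  have hIntlH : Intl H := (Intl.one.add Intl.X).mul (hIntlSb 1)
  have hIntlE : Intl E := (Intl.one.add Intl.X).mul (hIntlSb 2)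
  have hIntlπ : Intl π := Intl.pis n
  have hIntlG : Intl G := by
    rw [hG]
    exact Intl.X.add (hIntlπ.mul hIntlH)
  have hIntlF' : Intl (PowerSeries.derivativeFun F) := by
    intro j
    rw [show PowerSeries.derivativeFun F = PowerSeries.derivative ℚ_[p] F from rfl,
      PowerSeries.coeff_derivative, norm_mul]
    have h1 : ‖((j : ℚ_[p]) + 1)‖ ≤ 1 := by
      have h2 := norm_nat_le_one (p := p) (j + 1)
      push_cast at h2
      exact h2
    exact mul_le_one₀ (hF _) (norm_nonneg _) h1
  -- gammaSubst as a ser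
  have hgs : gammaSubst p χ F = ser (fun m => PowerSeries.C (R := ℚ_[p]) (a m) * G ^ m) := by
    ext j
    rw [gammaSubst, coeff_mk, coeff_ser]
    apply Finset.sum_congr rfl
    intro m _
    rw [PowerSeries.coeff_C_mul, hGdef]
  have hFser : F = ser (fun m => PowerSeries.C (R := ℚ_[p]) (a m) * X ^ m) := by
    ext j
    rw [coeff_ser]
    have : ∀ m ∈ Finset.range (j + 1),
        coeff j (PowerSeries.C (R := ℚ_[p]) (a m) * X ^ m) = if j = m then a m else 0 := by
      intro m _
      rw [PowerSeries.coeff_C_mul, PowerSeries.coeff_X_pow]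
      by_cases h : j = m <;> simp [h]
    rw [Finset.sum_congr rfl this, Finset.sum_ite_eq]
    simp [hadef]
  have hadmGX : adm (fun m => PowerSeries.C (R := ℚ_[p]) (a m) * (G ^ m - X ^ m)) := by
    intro m
    exact Dvd.dvd.mul_left (dvd_sub (pow_dvd_pow_of_dvd hXG m) (dvd_refl _)) _
  have hstep1 : gammaSubst p χ F - F
      = ser (fun m => PowerSeries.C (R := ℚ_[p]) (a m) * (G ^ m - X ^ m)) := by
    rw [hgs, hFser, ← ser_sub]
    apply ser_congr
    intro m
    ring
  have hstep2 : gammaSubst p χ F - F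
      = ser (fun m => PowerSeries.C (R := ℚ_[p]) (a (m + 1)) * (G ^ (m + 1) - X ^ (m + 1))) := by
    rw [hstep1, ser_shift hadmGX]
    simp
  -- Part 1
  set geom : ℕ → PowerSeries ℚ_[p] :=
    fun m => ∑ i ∈ Finset.range (m + 1), G ^ i * X ^ (m - i) with hgeomdef
  have hgeom : ∀ m, G ^ (m + 1) - X ^ (m + 1) = (π * H) * geom m := by
    intro m
    rw [← hGX, hgeomdef]
    have := geom_sum₂_mul (R := PowerSeries ℚ_[p]) (x := G) (y := X) (n := m + 1)
    simp only [Nat.add_sub_cancel] at this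
    rw [mul_comm]
    exact this.symm
  have hadmgeom : ∀ m, (X : PowerSeries ℚ_[p]) ^ m ∣ geom m := by
    intro m
    rw [hgeomdef]
    apply Finset.dvd_sum
    intro i hi
    rw [Finset.mem_range] at hi
    have h1 : (X : PowerSeries ℚ_[p]) ^ m = X ^ i * X ^ (m - i) := by
      rw [← pow_add]
      congr 1
      omega
    rw [h1]
    exact mul_dvd_mul (pow_dvd_pow_of_dvd hXG i) (dvd_refl _)
  have hIntlgeom : ∀ m, Intl (geom m) := by
    intro m
    rw [hgeomdef]
    exact Intl.sum fun i _ => (hIntlG.pow i).mul (Intl.X.pow _)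
  refine ⟨⟨H * ser (fun m => PowerSeries.C (R := ℚ_[p]) (a (m + 1)) * geom m), ?_, ?_⟩, ?_⟩
  · exact hIntlH.mul (Intl.ser fun m => (Intl.C (hF (m + 1))).mul (hIntlgeom m))
  · rw [hstep2]
    have : ser (fun m => PowerSeries.C (R := ℚ_[p]) (a (m + 1)) * (G ^ (m + 1) - X ^ (m + 1)))
        = ser (fun m => (π * H) * (PowerSeries.C (R := ℚ_[p]) (a (m + 1)) * geom m)) := by
      apply ser_congr
      intro m
      rw [hgeom m]
      ring
    rw [this, ser_mul (fun m => Dvd.dvd.mul_left (hadmgeom m) _) (π * H)]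
    ring
  -- Part 2
  set d : PowerSeries ℚ_[p] := π * H with hddef
  have hXd : (X : PowerSeries ℚ_[p]) ∣ d := Dvd.dvd.mul_right hXpi H
  set R : ℕ → PowerSeries ℚ_[p] := fun m => ∑ i ∈ Finset.range m,
    PowerSeries.C (R := ℚ_[p]) (((m + 1).choose (i + 2) : ℚ_[p])) * X ^ (m + 1 - (i + 2)) * d ^ i
    with hRdef
  have htaylor : ∀ m, G ^ (m + 1) - X ^ (m + 1)
      = PowerSeries.C (R := ℚ_[p]) ((m + 1 : ℕ) : ℚ_[p]) * X ^ m * d + d ^ 2 * R m := by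
    intro m
    rw [hG]
    have hpow : (X + d) ^ (m + 1)
        = ∑ k ∈ Finset.range (m + 2), d ^ k * X ^ (m + 1 - k) * ((m + 1).choose k : PowerSeries ℚ_[p]) := by
      rw [add_comm X d, add_pow]
    rw [hpow, Finset.sum_range_succ', Finset.sum_range_succ']
    have h0 : d ^ 0 * X ^ (m + 1 - 0) * ((m + 1).choose 0 : PowerSeries ℚ_[p]) = X ^ (m + 1) := by
      simp
    have h1 : d ^ (0 + 1) * X ^ (m + 1 - (0 + 1)) * ((m + 1).choose (0 + 1) : PowerSeries ℚ_[p])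
        = PowerSeries.C (R := ℚ_[p]) ((m + 1 : ℕ) : ℚ_[p]) * X ^ m * d := by
      have e1 : (m + 1).choose (0 + 1) = m + 1 := by simp
      have e2 : m + 1 - (0 + 1) = m := by omega
      rw [e1, e2, ← map_natCast (PowerSeries.C (R := ℚ_[p])) (m + 1)]
      ring
    have h2 : (∑ i ∈ Finset.range m,
          d ^ (i + 1 + 1) * X ^ (m + 1 - (i + 1 + 1)) * ((m + 1).choose (i + 1 + 1) : PowerSeries ℚ_[p]))
        = d ^ 2 * R m := by
      rw [hRdef, Finset.mul_sum]
      apply Finset.sum_congr rfl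
      intro i _
      rw [← map_natCast (PowerSeries.C (R := ℚ_[p])) ((m + 1).choose (i + 1 + 1))]
      have : i + 1 + 1 = i + 2 := by omega
      rw [this]
      ring
    rw [h0, h1, h2]
    ring
  have hadmR : ∀ m, (X : PowerSeries ℚ_[p]) ^ m ∣ R (m + 1) := by
    intro m
    rw [hRdef]
    apply Finset.dvd_sum
    intro i hi
    rw [Finset.mem_range] at hi
    have h1 : (X : PowerSeries ℚ_[p]) ^ m = X ^ (m + 1 + 1 - (i + 2)) * X ^ i := by
      rw [← pow_add]
      congr 1
      omega
    rw [h1]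
    exact mul_dvd_mul (Dvd.dvd.mul_left (dvd_refl _) _) (pow_dvd_pow_of_dvd hXd i)
  have hR0 : R 0 = 0 := by rw [hRdef]; simp
  have hIntlR : ∀ m, Intl (R m) := by
    intro m
    rw [hRdef]
    exact Intl.sum fun i _ =>
      ((Intl.C (norm_nat_le_one _)).mul (Intl.X.pow _)).mul ((hIntlπ.mul hIntlH).pow i)
  -- derivative as a ser
  have hserw : ser (fun m => PowerSeries.C (R := ℚ_[p]) (a (m + 1) * ((m + 1 : ℕ) : ℚ_[p])) * X ^ m)
      = PowerSeries.derivativeFun F := by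
    ext j
    rw [coeff_ser, show PowerSeries.derivativeFun F = PowerSeries.derivative ℚ_[p] F from rfl,
      PowerSeries.coeff_derivative]
    have : ∀ m ∈ Finset.range (j + 1),
        coeff j (PowerSeries.C (R := ℚ_[p]) (a (m + 1) * ((m + 1 : ℕ) : ℚ_[p])) * X ^ m)
          = if j = m then a (m + 1) * ((m + 1 : ℕ) : ℚ_[p]) else 0 := by
      intro m _
      rw [PowerSeries.coeff_C_mul, PowerSeries.coeff_X_pow]
      by_cases h : j = m <;> simp [h]
    rw [Finset.sum_congr rfl this, Finset.sum_ite_eq]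
    simp [hadef]
  -- the two families
  set B0 : PowerSeries ℚ_[p] := ser (fun m => PowerSeries.C (R := ℚ_[p]) (a (m + 1 + 1)) * R (m + 1))
    with hB0def
  have hmain : gammaSubst p χ F - F = d * PowerSeries.derivativeFun F + d ^ 2 * B0 := by
    rw [hstep2]
    have hsplit2 : ser (fun m => PowerSeries.C (R := ℚ_[p]) (a (m + 1)) * (G ^ (m + 1) - X ^ (m + 1)))
        = ser (fun m => d * (PowerSeries.C (R := ℚ_[p]) (a (m + 1) * ((m + 1 : ℕ) : ℚ_[p])) * X ^ m)
            + d ^ 2 * (PowerSeries.C (R := ℚ_[p]) (a (m + 1)) * R m)) := by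
      apply ser_congr
      intro m
      rw [htaylor m, map_mul]
      ring
    rw [hsplit2, ser_add]
    have hadm1 : adm (fun m => PowerSeries.C (R := ℚ_[p]) (a (m + 1) * ((m + 1 : ℕ) : ℚ_[p])) * X ^ m) :=
      fun m => Dvd.dvd.mul_left (dvd_refl _) _
    have hadm2 : adm (fun m => d ^ 2 * (PowerSeries.C (R := ℚ_[p]) (a (m + 1)) * R m)) := by
      intro m
      cases m with
      | zero => rw [pow_zero]; exact one_dvd _
      | succ k =>
          have h1 : (X : PowerSeries ℚ_[p]) ^ (k + 1) ∣ X ^ 2 * X ^ k := by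
            rw [← pow_add]; exact pow_dvd_pow X (by omega)
          exact h1.trans (mul_dvd_mul (pow_dvd_pow_of_dvd hXd 2) (Dvd.dvd.mul_left (hadmR k) _))
    have hadm3 : adm (fun m => PowerSeries.C (R := ℚ_[p]) (a (m + 1 + 1)) * R (m + 1)) :=
      fun m => Dvd.dvd.mul_left (hadmR m) _
    congr 1
    · rw [ser_mul hadm1 d, hserw]
    · rw [ser_shift hadm2 (by rw [hR0, mul_zero, mul_zero]), ser_mul hadm3 (d ^ 2), hB0def]
  refine ⟨E * PowerSeries.derivativeFun F + H ^ 2 * B0, ?_, ?_⟩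
  · exact (hIntlE.mul hIntlF').add ((hIntlH.pow 2).mul
      (Intl.ser fun m => (Intl.C (hF (m + 1 + 1))).mul (hIntlR (m + 1))))
  · rw [hmain]
    linear_combination PowerSeries.derivativeFun F * hPiH + (d + π * H) * B0 * hddef

end Main

end BenoisAux

/-- Benois' Lemma 2.2.1: for `F(X) ∈ O[[X]]` and `γ` acting by `π_n ↦ (1+π_n)^{χ(γ)} - 1` with
`χ(γ) ∈ 1 + p^n ℤ_p`, one has `γ(F) ≡ F mod π·O[[π_n]]` where `π = (1+π_n)^{p^n} - 1`; more
precisely `γ(F) - F ≡ ((χ(γ)-1)/p^n)·DF·π mod π²·O[[π_n]] ⊗ ℚ_p`, with `D = (1+X) d/dX`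
(membership in `O[[X]] ⊗ ℚ_p` meaning uniformly bounded coefficients). -/
theorem statement17 (p : ℕ) [Fact p.Prime] (n : ℕ) (hn : 1 ≤ n)
    (χ : ℤ_[p]) (hχ : ∃ u : ℤ_[p], χ = 1 + p ^ n * u)
    (F : PowerSeries ℚ_[p]) (hF : ∀ j, ‖coeff j F‖ ≤ 1) :
    (∃ A : PowerSeries ℚ_[p], (∀ j, ‖coeff j A‖ ≤ 1) ∧
      gammaSubst p χ F - F = (((1 + X) ^ (p ^ n) - 1 : PowerSeries ℚ_[p])) * A) ∧
    (∃ B : PowerSeries ℚ_[p], (∃ Cb : ℝ, ∀ j, ‖coeff j B‖ ≤ Cb) ∧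
      gammaSubst p χ F - F -
          C (((χ - 1 : ℤ_[p]) : ℚ_[p]) / (p ^ n : ℚ_[p])) *
            ((1 + X) * PowerSeries.derivativeFun F) *
            (((1 + X) ^ (p ^ n) - 1 : PowerSeries ℚ_[p]))
        = (((1 + X) ^ (p ^ n) - 1 : PowerSeries ℚ_[p])) ^ 2 * B) := by
  obtain ⟨u, hu⟩ := hχ
  subst hu
  have h := BenoisAux.main_aux n u F hF
  have hpn : ((p : ℚ_[p]) ^ n) ≠ 0 :=
    pow_ne_zero n (Nat.cast_ne_zero.mpr (Nat.Prime.ne_zero Fact.out))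
  have hc : (((1 + (p : ℤ_[p]) ^ n * u - 1 : ℤ_[p]) : ℚ_[p]) / ((p : ℚ_[p]) ^ n)) = (u : ℚ_[p]) := by
    push_cast
    field_simp
    ring
  constructor
  · obtain ⟨A, hA, hAeq⟩ := h.1
    exact ⟨A, hA, hAeq⟩
  · obtain ⟨B, hB, hBeq⟩ := h.2
    refine ⟨B, ⟨1, hB⟩, ?_⟩
    rw [show (((1 + (p : ℤ_[p]) ^ n * u - 1 : ℤ_[p]) : ℚ_[p]) / ((p : ℚ_[p]) ^ n)) = (u : ℚ_[p]) from hc]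
    exact hBeq
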